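/- Let p be an odd prime and G a finite p-group that is not powerful. Then there exists a normal subgroup N of G such that either G/N is an extra-special group of exponent p, or G/N = U × V where U ≤ Z(G/N) is elementary abelian and V is extra-special of exponent p. -/

import Mathlib

/-- A finite `p`-group is extra-special if its center, commutator subgroup and
Frattini subgroup coincide and have order `p`. -/
def IsExtraspecial (p : ℕ) (G : Type*) [Group G] : Prop :=
  Subgroup.center G = commutator G ∧ commutator G = frattini G ∧
    Nat.card (Subgroup.center G) = p

/-- The desired property of the quotient `G/N`: either it is extra-special of
exponent `p`, or it is the internal direct product of an elementary abelian
central subgroup `U` and an extra-special subgroup `V` of exponent `p`. -/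
def QuotientCondition (p : ℕ) {G : Type*} [Group G] (N : Subgroup G) [N.Normal] : Prop :=
  (IsExtraspecial p (G ⧸ N) ∧ Monoid.exponent (G ⧸ N) = p) ∨
    ∃ U V : Subgroup (G ⧸ N),
      U ≤ Subgroup.center (G ⧸ N) ∧ (∀ u ∈ U, u ^ p = 1) ∧
      IsExtraspecial p V ∧ Monoid.exponent V = p ∧
      U ⊓ V = ⊥ ∧ U ⊔ V = ⊤

open Subgroup Pointwise commutatorElement

section Aux

variable {H : Type*} [Group H]

lemma aux_pow_closure_normal (p : ℕ) :
    (Subgroup.closure {x : H | ∃ g : H, g ^ p = x}).Normal := by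
  constructor
  intro n hn g
  have himg : (MulAut.conj g).toMonoidHom '' {x : H | ∃ g : H, g ^ p = x}
      = {x : H | ∃ g : H, g ^ p = x} := by
    ext y
    constructor
    · rintro ⟨x, ⟨h, rfl⟩, rfl⟩
      exact ⟨g * h * g⁻¹, by simp [← map_pow]⟩
    · rintro ⟨h, rfl⟩
      refine ⟨(g⁻¹ * h * g) ^ p, ⟨g⁻¹ * h * g, rfl⟩, ?_⟩
      have hb : (g⁻¹ * h * g) ^ p = g⁻¹ * h ^ p * g := by
        rw [show g⁻¹ * h * g = g⁻¹ * h * (g⁻¹)⁻¹ by rw [inv_inv], conj_pow, inv_inv]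
      simp only [MulEquiv.coe_toMonoidHom, MulAut.conj_apply, hb]
      group
  have := Subgroup.mem_map_of_mem (MulAut.conj g).toMonoidHom hn
  rwa [MonoidHom.map_closure, himg] at this

lemma aux_commutator_sup_le (P B : Subgroup H) [P.Normal] [B.Normal] :
    ⁅P ⊔ B, (⊤ : Subgroup H)⁆ ≤ P ⊔ ⁅B, (⊤ : Subgroup H)⁆ := by
  rw [Subgroup.commutator_le]
  intro g hg t _
  have hg' : g ∈ ((P : Set H) * (B : Set H)) := by
    rw [← Subgroup.normal_mul]; exact hg
  obtain ⟨u, hu, v, hv, rfl⟩ := hg'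
  have hid : ⁅u*v, t⁆ = u * ⁅v,t⁆ * u⁻¹ * ⁅u,t⁆ := by simp [commutatorElement_def]; group
  rw [hid]
  have h1 : u * ⁅v,t⁆ * u⁻¹ ∈ ⁅B, (⊤ : Subgroup H)⁆ := by
    have : ⁅v, t⁆ ∈ ⁅B, (⊤ : Subgroup H)⁆ := commutator_mem_commutator hv (mem_top t)
    exact (Subgroup.commutator_normal B ⊤).conj_mem _ this u
  have h2 : ⁅u, t⁆ ∈ P := by
    have : u * (t * u⁻¹ * t⁻¹) ∈ P := P.mul_mem hu (by
      have := ‹P.Normal›.conj_mem u⁻¹ (P.inv_mem hu) t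
      simpa [mul_assoc] using this)
    simpa [commutatorElement_def, mul_assoc] using this
  exact Subgroup.mul_mem _ (Subgroup.mem_sup_right h1) (Subgroup.mem_sup_left h2)

lemma aux_descent [Finite H] {p : ℕ} [Fact p.Prime]
    (hG : IsPGroup p H) (P : Subgroup H) [P.Normal]
    (h : commutator H ≤ P ⊔ (⊤ : Subgroup H).lowerCentralSeries 2) : commutator H ≤ P := by
  obtain ⟨n, hn⟩ := Subgroup.nilpotent_iff_lowerCentralSeries.mp hG.isNilpotent
  have key : ∀ k, commutator H ≤ P ⊔ (⊤ : Subgroup H).lowerCentralSeries (k + 2) := by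
    intro k
    induction k with
    | zero => exact h
    | succ k ih =>
      have h1 : (⊤ : Subgroup H).lowerCentralSeries (k+1) ≤ P ⊔ (⊤ : Subgroup H).lowerCentralSeries (k+2) := by
        refine le_trans ?_ ih
        have h0 : (⊤ : Subgroup H).lowerCentralSeries (k+1) ≤ (⊤ : Subgroup H).lowerCentralSeries 1 :=
          Subgroup.lowerCentralSeries_antitone ⊤ (by omega)
        rwa [top_lowerCentralSeries_one] at h0
      have h2 : (⊤ : Subgroup H).lowerCentralSeries (k+2) ≤ P ⊔ (⊤ : Subgroup H).lowerCentralSeries (k+3) := by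
        calc (⊤ : Subgroup H).lowerCentralSeries (k+2) = ⁅(⊤ : Subgroup H).lowerCentralSeries (k+1), (⊤ : Subgroup H)⁆ := rfl
        _ ≤ ⁅P ⊔ (⊤ : Subgroup H).lowerCentralSeries (k+2), (⊤ : Subgroup H)⁆ :=
              Subgroup.commutator_mono h1 le_rfl
        _ ≤ P ⊔ ⁅(⊤ : Subgroup H).lowerCentralSeries (k+2), (⊤ : Subgroup H)⁆ := aux_commutator_sup_le _ _
        _ = P ⊔ (⊤ : Subgroup H).lowerCentralSeries (k+3) := rfl
      exact le_trans ih (sup_le le_sup_left h2)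
  have hle : (⊤ : Subgroup H).lowerCentralSeries (n+2) ≤ ⊥ := hn ▸ Subgroup.lowerCentralSeries_antitone ⊤ (by omega)
  have heq : P ⊔ (⊤ : Subgroup H).lowerCentralSeries (n+2) = P := by
    rw [le_bot_iff.mp hle, sup_bot_eq]
  exact heq ▸ key n

lemma aux_comm_left {c : H} (hc : ∀ x, x * c = c * x) (a g : H) : ⁅a*c, g⁆ = ⁅a, g⁆ := by
  have h : c * g * c⁻¹ = g := by rw [← hc g]; group
  calc ⁅a*c,g⁆ = a*(c*g*c⁻¹)*a⁻¹*g⁻¹ := by rw [commutatorElement_def]; group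
  _ = ⁅a,g⁆ := by rw [h, commutatorElement_def]

lemma aux_comm_right {d : H} (hd : ∀ x, x * d = d * x) (a b : H) : ⁅a, b*d⁆ = ⁅a, b⁆ := by
  have h : d * a⁻¹ * d⁻¹ = a⁻¹ := by rw [← hd a⁻¹]; group
  calc ⁅a,b*d⁆ = a*b*(d*a⁻¹*d⁻¹)*(d*d⁻¹)*b⁻¹ := by rw [commutatorElement_def]; group
  _ = ⁅a,b⁆ := by rw [h, commutatorElement_def]; group

end Aux

/-- Let `p` be an odd prime and `G` a finite `p`-group that is not
powerful (i.e. `γ₂(G) ≰ G^p`).  Then there is a normal subgroup `N` of `G` such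
that either `G/N` is extra-special of exponent `p`, or `G/N = U × V` where
`U ≤ Z(G/N)` is elementary abelian and `V` is extra-special of exponent `p`. -/
theorem stmt2 {p : ℕ} [Fact p.Prime] (hodd : Odd p) {G : Type*} [Group G] [Finite G]
    (hG : IsPGroup p G)
    (hnp : ¬ commutator G ≤ Subgroup.closure {x : G | ∃ g : G, g ^ p = x}) :
    ∃ (N : Subgroup G) (h : N.Normal), @QuotientCondition p G _ N h := by
  classical
  have hp : p.Prime := Fact.out
  set P : Subgroup G := Subgroup.closure {x : G | ∃ g : G, g ^ p = x} with hPdef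
  haveI hPn : P.Normal := aux_pow_closure_normal p
  set S : Set (Subgroup G) :=
    {N | N.Normal ∧ P ≤ N ∧ (⊤ : Subgroup G).lowerCentralSeries 2 ≤ N ∧ ¬ commutator G ≤ N} with hSdef
  have hN0 : (P ⊔ (⊤ : Subgroup G).lowerCentralSeries 2) ∈ S := by
    refine ⟨Subgroup.sup_normal _ _, le_sup_left, le_sup_right, fun hcon => ?_⟩
    exact hnp (aux_descent hG P hcon)
  obtain ⟨N, hNS, hNmax⟩ :=
    Set.Finite.exists_maximalFor id S (Set.toFinite S) ⟨_, hN0⟩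
  obtain ⟨hNnormal, hPN, hLCS, hcomm⟩ := hNS
  haveI := hNnormal
  set π : G →* G ⧸ N := QuotientGroup.mk' N with hπdef
  have hπs : Function.Surjective π := QuotientGroup.mk'_surjective N
  have hker : ∀ g : G, π g = 1 ↔ g ∈ N := by
    intro g
    rw [← MonoidHom.mem_ker, QuotientGroup.ker_mk']
  -- every element of the quotient has p-th power 1
  have hexp1 : ∀ x : G ⧸ N, x ^ p = 1 := by
    intro x
    obtain ⟨g, rfl⟩ := hπs x
    rw [← map_pow, hker]
    exact hPN (Subgroup.subset_closure ⟨g, rfl⟩)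
  -- third lower central series term is killed
  have hγ3 : ∀ a b c : G, ⁅⁅a, b⁆, c⁆ ∈ N := by
    intro a b c
    apply hLCS
    exact commutator_mem_commutator
      (commutator_mem_commutator (mem_top a) (mem_top b)) (mem_top c)
  -- the commutator subgroup of the quotient is central
  have hcc : commutator (G ⧸ N) ≤ Subgroup.center (G ⧸ N) := by
    rw [_root_.commutator_def, Subgroup.commutator_le]
    intro x _ y _
    obtain ⟨a, rfl⟩ := hπs x
    obtain ⟨b, rfl⟩ := hπs y
    rw [Subgroup.mem_center_iff]
    intro z
    obtain ⟨c, rfl⟩ := hπs z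
    have h1 : ⁅(π c), ⁅π a, π b⁆⁆ = 1 := by
      rw [← map_commutatorElement, ← map_commutatorElement, hker,
        ← commutatorElement_inv]
      exact N.inv_mem (hγ3 a b c)
    exact commutatorElement_eq_one_iff_mul_comm.mp h1
  -- the commutator subgroup of the quotient is the image of that of G
  have hmapcomm : commutator (G ⧸ N) = Subgroup.map π (commutator G) := by
    rw [_root_.commutator_def, _root_.commutator_def, Subgroup.map_commutator,
      Subgroup.map_top_of_surjective π hπs]
  have hCne : commutator (G ⧸ N) ≠ ⊥ := by
    intro hbot
    rw [hmapcomm, Subgroup.map_eq_bot_iff, QuotientGroup.ker_mk'] at hbot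
    exact hcomm hbot
  -- key maximality property
  have key : ∀ M : Subgroup (G ⧸ N), M ≤ Subgroup.center (G ⧸ N) →
      ¬ commutator (G ⧸ N) ≤ M → M = ⊥ := by
    intro M hMc hCM
    haveI : M.Normal := by
      constructor
      intro n hn g
      rw [Subgroup.mem_center_iff.mp (hMc hn) g]
      simpa using hn
    have hNN' : N ≤ Subgroup.comap π M := by
      intro n hn
      rw [Subgroup.mem_comap, (hker n).mpr hn]
      exact M.one_mem
    have hN'S : Subgroup.comap π M ∈ S := by
      refine ⟨Subgroup.Normal.comap ‹M.Normal› π, le_trans hPN hNN',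
        le_trans hLCS hNN', fun hc => ?_⟩
      apply hCM
      rw [hmapcomm]
      exact Subgroup.map_le_iff_le_comap.mpr hc
    have hEq : N = Subgroup.comap π M := le_antisymm hNN' (hNmax hN'S hNN')
    have : M = Subgroup.map π (Subgroup.comap π M) :=
      (Subgroup.map_comap_eq_self_of_surjective hπs M).symm
    rw [← hEq] at this
    rw [this, Subgroup.map_eq_bot_iff, QuotientGroup.ker_mk']
  -- the commutator subgroup has order p
  obtain ⟨x0, hx0⟩ := Subgroup.ne_bot_iff_exists_ne_one.mp hCne
  set x : G ⧸ N := (x0 : G ⧸ N) with hxdef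
  have hxC : x ∈ commutator (G ⧸ N) := x0.2
  have hx1 : x ≠ 1 := fun h => hx0 (Subtype.ext h)
  have hxord : orderOf x = p := orderOf_eq_prime (hexp1 x) hx1
  have hxle : Subgroup.zpowers x ≤ commutator (G ⧸ N) := Subgroup.zpowers_le.mpr hxC
  have hCeq : commutator (G ⧸ N) = Subgroup.zpowers x := by
    refine le_antisymm ?_ hxle
    by_contra h
    have := key (Subgroup.zpowers x) (le_trans hxle hcc) h
    exact hx1 (by simpa [this] using Subgroup.mem_zpowers x)
  have hcard : Nat.card (commutator (G ⧸ N)) = p := by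
    rw [hCeq, Nat.card_zpowers, hxord]
  -- the center equals the commutator subgroup
  have hzc : Subgroup.center (G ⧸ N) ≤ commutator (G ⧸ N) := by
    intro z hz
    by_contra hzC
    have hz1 : z ≠ 1 := fun h => hzC (h ▸ (commutator (G ⧸ N)).one_mem)
    have hne : ¬ commutator (G ⧸ N) ≤ Subgroup.zpowers z := by
      intro hle
      have hzord : orderOf z = p := orderOf_eq_prime (hexp1 z) hz1
      have : commutator (G ⧸ N) = Subgroup.zpowers z := by
        refine Subgroup.eq_of_le_of_card_ge hle ?_
        rw [Nat.card_zpowers, hzord, hcard]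
      exact hzC (this ▸ Subgroup.mem_zpowers z)
    have := key (Subgroup.zpowers z) (Subgroup.zpowers_le.mpr hz) hne
    exact hz1 (by simpa [this] using Subgroup.mem_zpowers z)
  have hcenter : Subgroup.center (G ⧸ N) = commutator (G ⧸ N) := le_antisymm hzc hcc
  -- the commutator subgroup is contained in every maximal subgroup
  have hcoatoms : ∀ K : Subgroup (G ⧸ N), IsCoatom K → commutator (G ⧸ N) ≤ K := by
    intro K hK
    by_contra hCK
    have hlt : K < K ⊔ commutator (G ⧸ N) :=
      lt_of_le_of_ne le_sup_left (fun h => hCK (le_sup_right.trans h.symm.le))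
    have hsup : K ⊔ commutator (G ⧸ N) = ⊤ := hK.2 _ hlt
    apply hCK
    rw [_root_.commutator_def, Subgroup.commutator_le]
    intro g _ h _
    have hg2 : g ∈ ((K : Set (G ⧸ N)) * (commutator (G ⧸ N) : Set (G ⧸ N))) := by
      rw [← Subgroup.mul_normal, hsup]; simp
    have hh2 : h ∈ ((K : Set (G ⧸ N)) * (commutator (G ⧸ N) : Set (G ⧸ N))) := by
      rw [← Subgroup.mul_normal, hsup]; simp
    obtain ⟨k1, hk1, c1, hc1, rfl⟩ := hg2
    obtain ⟨k2, hk2, c2, hc2, rfl⟩ := hh2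
    have hcen1 : ∀ w, w * c1 = c1 * w := fun w => Subgroup.mem_center_iff.mp (hcc hc1) w
    have hcen2 : ∀ w, w * c2 = c2 * w := fun w => Subgroup.mem_center_iff.mp (hcc hc2) w
    rw [aux_comm_left hcen1, aux_comm_right hcen2, commutatorElement_def]
    exact K.mul_mem (K.mul_mem (K.mul_mem hk1 hk2) (K.inv_mem hk1)) (K.inv_mem hk2)
  have hCfr : commutator (G ⧸ N) ≤ frattini (G ⧸ N) := by
    unfold frattini Order.radical
    exact le_iInf₂ hcoatoms
  -- frattini is contained in the commutator subgroup
  have hfrC : frattini (G ⧸ N) ≤ commutator (G ⧸ N) := by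
    intro y hy
    by_contra hyC
    obtain ⟨M, ⟨hCM, hyM⟩, hMmax⟩ :=
      Set.Finite.exists_maximalFor id
        {H : Subgroup (G ⧸ N) | commutator (G ⧸ N) ≤ H ∧ y ∉ H}
        (Set.toFinite _) ⟨commutator (G ⧸ N), le_rfl, hyC⟩
    haveI hMnormal : M.Normal := by
      constructor
      intro n hn g
      have h' : g * n * g⁻¹ = ⁅g, n⁆ * n := by rw [commutatorElement_def]; group
      rw [h']
      exact M.mul_mem (hCM (commutator_mem_commutator (mem_top g) (mem_top n))) hn
    have hstep : ∀ z : G ⧸ N, z ∉ M → y ∈ M ⊔ Subgroup.zpowers z := by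
      intro z hz
      by_contra hy'
      have h := hMmax (j := M ⊔ Subgroup.zpowers z) ⟨le_trans hCM le_sup_left, hy'⟩ le_sup_left
      simp only [id] at h
      exact hz (h (Subgroup.mem_sup_right (Subgroup.mem_zpowers z)))
    have htop : M ⊔ Subgroup.zpowers y = ⊤ := by
      rw [Subgroup.eq_top_iff']
      intro z
      by_cases hz : z ∈ M
      · exact Subgroup.mem_sup_left hz
      · have hmem := hstep z hz
        rw [← SetLike.mem_coe, Subgroup.normal_mul] at hmem
        obtain ⟨m, hm, w, hw, heq⟩ := hmem
        simp only [SetLike.mem_coe] at hm hw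
        beta_reduce at heq
        obtain ⟨k, rfl⟩ := Subgroup.mem_zpowers_iff.mp hw
        have hzp : z ^ ((p : ℤ)) = 1 := by
          rw [zpow_natCast]; exact hexp1 z
        have hpk : ¬ ((p : ℤ)) ∣ k := by
          rintro ⟨j, rfl⟩
          apply hyM
          have h0 : z ^ ((p : ℤ) * j) = 1 := by rw [zpow_mul, hzp, one_zpow]
          rw [h0, mul_one] at heq
          exact heq ▸ hm
        obtain ⟨a, b, hab⟩ :=
          (Prime.coprime_iff_not_dvd (Nat.prime_iff_prime_int.mp hp)).mpr hpk
        have h1' : ((p : ℤ)) * a + k * b = 1 := by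
          rw [mul_comm ((p : ℤ)) a, mul_comm k b]; exact hab
        have hzeq : z = (z ^ k) ^ b := by
          conv_lhs => rw [← zpow_one z, ← h1']
          rw [zpow_add, zpow_mul, zpow_mul, hzp, one_zpow, one_mul]
        have hzk : z ^ k = m⁻¹ * y := by
          rw [← heq]; group
        rw [hzeq, hzk]
        exact Subgroup.zpow_mem _ (Subgroup.mul_mem _
          (Subgroup.mem_sup_left (M.inv_mem hm))
          (Subgroup.mem_sup_right (Subgroup.mem_zpowers y))) b
    have hcoatom : IsCoatom M := by
      constructor
      · intro h
        exact hyM (h ▸ Subgroup.mem_top y)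
      · intro K hK
        obtain ⟨w, hwK, hwM⟩ := SetLike.exists_of_lt hK
        have hyK : y ∈ K := by
          have := hstep w hwM
          exact (sup_le hK.le (Subgroup.zpowers_le.mpr hwK)) this
        rw [← top_le_iff, ← htop]
        exact sup_le hK.le (Subgroup.zpowers_le.mpr hyK)
    exact hyM (frattini_le_coatom hcoatom hy)
  have hfr : commutator (G ⧸ N) = frattini (G ⧸ N) := le_antisymm hCfr hfrC
  -- exponent
  have hexp : Monoid.exponent (G ⧸ N) = p := by
    have hdvd := Monoid.exponent_dvd_of_forall_pow_eq_one hexp1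
    rcases hp.eq_one_or_self_of_dvd _ hdvd with h1 | h2
    · exfalso
      apply hx1
      rw [← pow_one x, ← h1]
      exact Monoid.pow_exponent_eq_one x
    · exact h2
  refine ⟨N, hNnormal, Or.inl ⟨⟨hcenter, hfr, ?_⟩, hexp⟩⟩
  rw [hcenter, hcard]
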